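/- Assume the exponential moment condition (EM). Write a for the p×p matrix with columns a¹,…,a^p, and define c(x) = A⁰ + Σ_{i=1}^p x_i Aⁱ, K(x,·) = K⁰ + Σ_{i=1}^p x_i Kⁱ, and k(x,y) = ½ yᵀ c(x) y + ∫ (e^{y·z} − 1 − y·z) K(x,dz). Let u ∈ ℝ^p, T ∈ (0,∞], and let (ψ₀, ψ) : [0,T) → ℝ × ℝ^p be continuously differentiable with ψ₀(0) = 0, ψ(0) = u, ψ₀'(t) = R₀(ψ(t)) and ψᵢ'(t) = Rᵢ(ψ(t)) for i = 1,…,p. Let f(t,x) denote the solution of the linear ODE x' = a⁰ + a x with f(0,x) = x. Then for every x ∈ ℝ^p and every t ∈ [0,T): ψ₀(t) + ψ(t)·x = u·f(t,x) + ∫₀ᵗ k(f(t−s,x), ψ(s)) ds. -/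

import Mathlib

open MeasureTheory RealInnerProductSpace intervalIntegral
open scoped ENNReal

noncomputable section

/-- Integration of a real function against a signed measure: the difference of the integrals
against the positive and negative parts of its Jordan decomposition. -/
def signedIntegral {α : Type*} [MeasurableSpace α] (μ : SignedMeasure α) (f : α → ℝ) : ℝ :=
  ∫ z, f z ∂μ.toJordanDecomposition.posPart - ∫ z, f z ∂μ.toJordanDecomposition.negPart

/-- The functions `Rᵢ(y) = y·aⁱ + ½ yᵀAⁱy + ∫ (e^{y·z} − 1 − y·z) Kⁱ(dz)`, `i = 0,…,p`. -/
def Ric {p : ℕ} (a : Fin (p + 1) → EuclideanSpace ℝ (Fin p))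
    (A : Fin (p + 1) → Matrix (Fin p) (Fin p) ℝ)
    (K : Fin (p + 1) → SignedMeasure (EuclideanSpace ℝ (Fin p)))
    (i : Fin (p + 1)) (y : EuclideanSpace ℝ (Fin p)) : ℝ :=
  ⟪y, a i⟫ + (1 / 2) * ∑ k, ∑ l, y k * A i k l * y l
    + signedIntegral (K i) fun z => Real.exp ⟪y, z⟫ - 1 - ⟪y, z⟫

/-- The affine combination `K(x,·) = K⁰ + Σᵢ xᵢ Kⁱ` of the signed jump measures. -/
def Kaff {p : ℕ} (K : Fin (p + 1) → SignedMeasure (EuclideanSpace ℝ (Fin p)))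
    (x : EuclideanSpace ℝ (Fin p)) : SignedMeasure (EuclideanSpace ℝ (Fin p)) :=
  K 0 + ∑ i : Fin p, x i • K i.succ

/-- `k(x,y) = ½ yᵀ c(x) y + ∫ (e^{y·z} − 1 − y·z) K(x,dz)` with
`c(x) = A⁰ + Σᵢ xᵢ Aⁱ` and `K(x,·) = K⁰ + Σᵢ xᵢ Kⁱ`. -/
def kxy {p : ℕ} (A : Fin (p + 1) → Matrix (Fin p) (Fin p) ℝ)
    (K : Fin (p + 1) → SignedMeasure (EuclideanSpace ℝ (Fin p)))
    (x y : EuclideanSpace ℝ (Fin p)) : ℝ :=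
  (1 / 2) * ∑ k, ∑ l, y k * (A 0 + ∑ i : Fin p, x i • A i.succ) k l * y l
    + signedIntegral (Kaff K x) fun z => Real.exp ⟪y, z⟫ - 1 - ⟪y, z⟫

namespace Stmt2

variable {α : Type*} [MeasurableSpace α]

instance (μ : SignedMeasure α) : IsFiniteMeasure μ.totalVariation := by
  unfold SignedMeasure.totalVariation; infer_instance

lemma sm_apply_eq (μ : SignedMeasure α) {E : Set α} (hE : MeasurableSet E) :
    μ E = (μ.toJordanDecomposition.posPart E).toReal
      - (μ.toJordanDecomposition.negPart E).toReal := by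
  conv_lhs => rw [← μ.toSignedMeasure_toJordanDecomposition]
  exact Measure.toSignedMeasure_sub_apply hE

lemma apply_le_posPart (μ : SignedMeasure α) {E : Set α} (hE : MeasurableSet E) :
    μ E ≤ (μ.toJordanDecomposition.posPart E).toReal := by
  rw [sm_apply_eq μ hE]
  have : 0 ≤ (μ.toJordanDecomposition.negPart E).toReal := ENNReal.toReal_nonneg
  linarith

lemma posPart_add_le (μ ν : SignedMeasure α) :
    (μ + ν).toJordanDecomposition.posPart
      ≤ μ.toJordanDecomposition.posPart + ν.toJordanDecomposition.posPart := by
  refine Measure.le_iff.2 fun E hE => ?_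
  obtain ⟨i, hi₁, hi₂, hi₃, hpos, hneg⟩ := (μ + ν).toJordanDecomposition_spec
  rw [← ENNReal.toReal_le_toReal (measure_ne_top _ _) (by finiteness)]
  rw [hpos, SignedMeasure.toMeasureOfZeroLE_apply _ hi₂ hi₁ hE]
  have h1 : (μ + ν) (i ∩ E) = μ (i ∩ E) + ν (i ∩ E) := rfl
  have h2 := apply_le_posPart μ (hi₁.inter hE)
  have h3 := apply_le_posPart ν (hi₁.inter hE)
  have h4 : (μ.toJordanDecomposition.posPart (i ∩ E)).toReal
      ≤ (μ.toJordanDecomposition.posPart E).toReal :=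
    ENNReal.toReal_mono (measure_ne_top _ _) (measure_mono Set.inter_subset_right)
  have h5 : (ν.toJordanDecomposition.posPart (i ∩ E)).toReal
      ≤ (ν.toJordanDecomposition.posPart E).toReal :=
    ENNReal.toReal_mono (measure_ne_top _ _) (measure_mono Set.inter_subset_right)
  rw [Measure.add_apply, ENNReal.toReal_add (measure_ne_top _ _) (measure_ne_top _ _)]
  simp only [ENNReal.coe_toReal, NNReal.coe_mk]
  linarith

lemma negPart_eq_posPart_neg (μ : SignedMeasure α) :
    μ.toJordanDecomposition.negPart = (-μ).toJordanDecomposition.posPart := by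
  rw [SignedMeasure.toJordanDecomposition_neg]; rfl

lemma negPart_add_le (μ ν : SignedMeasure α) :
    (μ + ν).toJordanDecomposition.negPart
      ≤ μ.toJordanDecomposition.negPart + ν.toJordanDecomposition.negPart := by
  rw [negPart_eq_posPart_neg, negPart_eq_posPart_neg, negPart_eq_posPart_neg,
    show -(μ + ν) = -μ + -ν by abel]
  exact posPart_add_le _ _

lemma totalVariation_add_le' (μ ν : SignedMeasure α) :
    (μ + ν).totalVariation ≤ μ.totalVariation + ν.totalVariation := by
  unfold SignedMeasure.totalVariation
  calc (μ + ν).toJordanDecomposition.posPart + (μ + ν).toJordanDecomposition.negPart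
      ≤ (μ.toJordanDecomposition.posPart + ν.toJordanDecomposition.posPart)
        + (μ.toJordanDecomposition.negPart + ν.toJordanDecomposition.negPart) :=
        add_le_add (posPart_add_le μ ν) (negPart_add_le μ ν)
    _ = _ := by abel

lemma tr3 {a b c : ℝ≥0∞} (ha : a ≠ ⊤) (hb : b ≠ ⊤) (hc : c ≠ ⊤) :
    (a + (b + c)).toReal = a.toReal + b.toReal + c.toReal := by
  rw [ENNReal.toReal_add ha (ENNReal.add_ne_top.2 ⟨hb, hc⟩), ENNReal.toReal_add hb hc]
  ring

lemma jordan_add_identity (μ ν : SignedMeasure α) :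
    (μ + ν).toJordanDecomposition.posPart + (μ.toJordanDecomposition.negPart
        + ν.toJordanDecomposition.negPart)
      = (μ + ν).toJordanDecomposition.negPart + (μ.toJordanDecomposition.posPart
        + ν.toJordanDecomposition.posPart) := by
  ext E hE
  rw [← ENNReal.toReal_eq_toReal_iff' (by finiteness) (by finiteness)]
  have h0 : (μ + ν) E = μ E + ν E := rfl
  have h1 := sm_apply_eq (μ + ν) hE
  have h2 := sm_apply_eq μ hE
  have h3 := sm_apply_eq ν hE
  simp only [Measure.add_apply]
  rw [tr3 (measure_ne_top _ _) (measure_ne_top _ _) (measure_ne_top _ _),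
    tr3 (measure_ne_top _ _) (measure_ne_top _ _) (measure_ne_top _ _)]
  linarith


lemma posPart_le_tv (μ : SignedMeasure α) :
    μ.toJordanDecomposition.posPart ≤ μ.totalVariation := Measure.le_add_right le_rfl

lemma negPart_le_tv (μ : SignedMeasure α) :
    μ.toJordanDecomposition.negPart ≤ μ.totalVariation := Measure.le_add_left le_rfl

lemma signedIntegral_add (μ ν : SignedMeasure α) {f : α → ℝ}
    (hμ : Integrable f μ.totalVariation) (hν : Integrable f ν.totalVariation) :
    signedIntegral (μ + ν) f = signedIntegral μ f + signedIntegral ν f := by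
  have hp1 : Integrable f μ.toJordanDecomposition.posPart := hμ.mono_measure (posPart_le_tv μ)
  have hn1 : Integrable f μ.toJordanDecomposition.negPart := hμ.mono_measure (negPart_le_tv μ)
  have hp2 : Integrable f ν.toJordanDecomposition.posPart := hν.mono_measure (posPart_le_tv ν)
  have hn2 : Integrable f ν.toJordanDecomposition.negPart := hν.mono_measure (negPart_le_tv ν)
  have htv : Integrable f (μ + ν).totalVariation :=
    (hμ.add_measure hν).mono_measure (totalVariation_add_le' μ ν)
  have hp : Integrable f (μ + ν).toJordanDecomposition.posPart :=
    htv.mono_measure (posPart_le_tv _)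
  have hn : Integrable f (μ + ν).toJordanDecomposition.negPart :=
    htv.mono_measure (negPart_le_tv _)
  have key : ∫ z, f z ∂((μ + ν).toJordanDecomposition.posPart
        + (μ.toJordanDecomposition.negPart + ν.toJordanDecomposition.negPart))
      = ∫ z, f z ∂((μ + ν).toJordanDecomposition.negPart
        + (μ.toJordanDecomposition.posPart + ν.toJordanDecomposition.posPart)) := by
    rw [jordan_add_identity]
  rw [integral_add_measure hp (hn1.add_measure hn2),
    integral_add_measure hn (hp1.add_measure hp2),
    integral_add_measure hn1 hn2, integral_add_measure hp1 hp2] at key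
  unfold _root_.signedIntegral
  linarith

lemma signedIntegral_smul (μ : SignedMeasure α) (f : α → ℝ) (r : ℝ) :
    signedIntegral (r • μ) f = r * signedIntegral μ f := by
  rcases le_or_gt 0 r with hr | hr
  · unfold _root_.signedIntegral
    rw [SignedMeasure.toJordanDecomposition_smul_real,
      JordanDecomposition.real_smul_posPart_nonneg _ _ hr,
      JordanDecomposition.real_smul_negPart_nonneg _ _ hr]
    rw [integral_smul_nnreal_measure, integral_smul_nnreal_measure]
    simp [NNReal.smul_def, Real.coe_toNNReal r hr]
    ring
  · unfold _root_.signedIntegral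
    rw [SignedMeasure.toJordanDecomposition_smul_real,
      JordanDecomposition.real_smul_posPart_neg _ _ hr,
      JordanDecomposition.real_smul_negPart_neg _ _ hr]
    rw [integral_smul_nnreal_measure, integral_smul_nnreal_measure]
    simp [NNReal.smul_def, Real.coe_toNNReal (-r) (by linarith)]
    ring

lemma tv_smul_le (μ : SignedMeasure α) (r : ℝ) :
    (r • μ).totalVariation = Real.toNNReal |r| • μ.totalVariation := by
  unfold SignedMeasure.totalVariation
  rcases le_or_gt 0 r with hr | hr
  · rw [SignedMeasure.toJordanDecomposition_smul_real,
      JordanDecomposition.real_smul_posPart_nonneg _ _ hr,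
      JordanDecomposition.real_smul_negPart_nonneg _ _ hr, abs_of_nonneg hr, smul_add]
  · rw [SignedMeasure.toJordanDecomposition_smul_real,
      JordanDecomposition.real_smul_posPart_neg _ _ hr,
      JordanDecomposition.real_smul_negPart_neg _ _ hr, abs_of_neg hr, smul_add]
    exact add_comm _ _

lemma integrable_tv_smul {μ : SignedMeasure α} {f : α → ℝ} (r : ℝ)
    (h : Integrable f μ.totalVariation) : Integrable f (r • μ).totalVariation := by
  rw [tv_smul_le]
  have : (|r|.toNNReal • μ.totalVariation) = ((|r|.toNNReal : ℝ≥0∞) • μ.totalVariation) := rfl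
  rw [this]
  exact h.smul_measure ENNReal.coe_ne_top


open RealInnerProductSpace

variable {q : ℕ}

local notation "E" => EuclideanSpace ℝ (Fin q)

def sgn (b : Fin q → Bool) : E := WithLp.toLp 2 (fun i => if b i then 1 else -1)

lemma inner_apply' (y z : E) : ⟪y, z⟫ = ∑ i, y i * z i := by
  simp [PiLp.inner_apply, RCLike.inner_apply, conj_trivial]
  exact Finset.sum_congr rfl fun _ _ => mul_comm _ _

lemma norm_le_sum_abs (z : E) : ‖z‖ ≤ ∑ i, |z i| := by
  rw [EuclideanSpace.norm_eq]
  have h1 : ∑ i, ‖z i‖ ^ 2 ≤ (∑ i, |z i|) ^ 2 := by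
    rw [sq (∑ i, |z i|), Finset.sum_mul]
    refine Finset.sum_le_sum fun i _ => ?_
    rw [Real.norm_eq_abs, sq]
    exact mul_le_mul_of_nonneg_left
      (Finset.single_le_sum (fun j _ => abs_nonneg (z j)) (Finset.mem_univ i)) (abs_nonneg _)
  calc √(∑ i, ‖z i‖ ^ 2) ≤ √((∑ i, |z i|) ^ 2) := Real.sqrt_le_sqrt h1
    _ = ∑ i, |z i| := Real.sqrt_sq (Finset.sum_nonneg fun j _ => abs_nonneg _)

lemma inner_sgn (z : E) : ⟪sgn (fun i => decide (0 ≤ z i)), z⟫ = ∑ i, |z i| := by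
  rw [inner_apply']
  refine Finset.sum_congr rfl fun i _ => ?_
  rcases le_or_gt 0 (z i) with h | h
  · simp [sgn, h, abs_of_nonneg h]
  · simp [sgn, not_le.2 h, abs_of_neg h]

lemma exp_le_bound (c y z : E) (h : ‖y - c‖ ≤ 1) :
    Real.exp ⟪y, z⟫ ≤ ∑ b : Fin q → Bool, Real.exp ⟪c + sgn b, z⟫ := by
  set b₀ : Fin q → Bool := fun i => decide (0 ≤ z i)
  have h1 : ⟪y, z⟫ ≤ ⟪c + sgn b₀, z⟫ := by
    rw [inner_add_left, inner_sgn]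
    have h2 : ⟪y, z⟫ - ⟪c, z⟫ = ⟪y - c, z⟫ := by rw [inner_sub_left]
    have h3 : ⟪y - c, z⟫ ≤ ‖y - c‖ * ‖z‖ := real_inner_le_norm _ _
    have h4 : ‖y - c‖ * ‖z‖ ≤ 1 * ‖z‖ := mul_le_mul_of_nonneg_right h (norm_nonneg _)
    have h5 := norm_le_sum_abs z
    linarith
  calc Real.exp ⟪y, z⟫ ≤ Real.exp ⟪c + sgn b₀, z⟫ := Real.exp_le_exp.2 h1
    _ ≤ _ := Finset.single_le_sum (f := fun b => Real.exp ⟪c + sgn b, z⟫)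
      (fun b _ => (Real.exp_pos _).le) (Finset.mem_univ b₀)

lemma measurableSet_gt1 : MeasurableSet {z : E | 1 < ‖z‖} :=
  (isOpen_lt continuous_const continuous_norm).measurableSet

lemma cont_exp_inner (z : E) : Continuous fun y : E => Real.exp ⟪y, z⟫ :=
  Real.continuous_exp.comp (Continuous.inner continuous_id continuous_const)

lemma cont_inner_right (y : E) : Continuous fun z : E => Real.exp ⟪y, z⟫ :=
  Real.continuous_exp.comp (Continuous.inner continuous_const continuous_id)

lemma integrable_exp (m : Measure E) [IsFiniteMeasure m]
    (hEM : ∀ k : E, ∫⁻ z in {z : E | 1 < ‖z‖}, ENNReal.ofReal (Real.exp ⟪k, z⟫) ∂m < ⊤)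
    (y : E) : Integrable (fun z => Real.exp ⟪y, z⟫) m := by
  have hmeas : AEStronglyMeasurable (fun z => Real.exp ⟪y, z⟫) m :=
    (cont_inner_right y).aestronglyMeasurable
  rw [← integrableOn_univ, ← Set.union_compl_self {z : E | 1 < ‖z‖}]
  refine IntegrableOn.union ⟨hmeas.restrict, ?_⟩ ?_
  · rw [hasFiniteIntegral_iff_ofReal (Filter.Eventually.of_forall fun z => (Real.exp_pos _).le)]
    exact hEM y
  · refine Integrable.mono' (integrable_const (Real.exp ‖y‖)) hmeas.restrict ?_
    rw [ae_restrict_iff' measurableSet_gt1.compl]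
    refine Filter.Eventually.of_forall fun z hz => ?_
    have hz1 : ‖z‖ ≤ 1 := not_lt.1 hz
    rw [Real.norm_eq_abs, abs_of_pos (Real.exp_pos _), Real.exp_le_exp]
    calc ⟪y, z⟫ ≤ ‖y‖ * ‖z‖ := real_inner_le_norm _ _
      _ ≤ ‖y‖ * 1 := mul_le_mul_of_nonneg_left hz1 (norm_nonneg _)
      _ = ‖y‖ := mul_one _

lemma fy_nonneg (x : ℝ) : 0 ≤ Real.exp x - 1 - x := by
  have := Real.add_one_le_exp x; linarith

lemma fy_le (x : ℝ) : Real.exp x - 1 - x ≤ Real.exp x + Real.exp (-x) := by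
  have h1 := Real.add_one_le_exp (-x)
  have h2 := Real.exp_pos x
  linarith

lemma cont_fy_left (z : E) : Continuous fun y : E => Real.exp ⟪y, z⟫ - 1 - ⟪y, z⟫ :=
  ((cont_exp_inner z).sub continuous_const).sub (Continuous.inner continuous_id continuous_const)

lemma cont_fy_right (y : E) : Continuous fun z : E => Real.exp ⟪y, z⟫ - 1 - ⟪y, z⟫ :=
  ((cont_inner_right y).sub continuous_const).sub (Continuous.inner continuous_const continuous_id)

lemma integrable_fy (m : Measure E) [IsFiniteMeasure m]
    (hEM : ∀ k : E, ∫⁻ z in {z : E | 1 < ‖z‖}, ENNReal.ofReal (Real.exp ⟪k, z⟫) ∂m < ⊤)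
    (y : E) : Integrable (fun z => Real.exp ⟪y, z⟫ - 1 - ⟪y, z⟫) m := by
  refine Integrable.mono' ((integrable_exp m hEM y).add (integrable_exp m hEM (-y)))
    (cont_fy_right y).aestronglyMeasurable ?_
  refine Filter.Eventually.of_forall fun z => ?_
  simp only [Pi.add_apply]
  rw [Real.norm_eq_abs, abs_of_nonneg (fy_nonneg _), inner_neg_left]
  exact fy_le _

lemma continuousAt_int_fy (m : Measure E) [IsFiniteMeasure m]
    (hEM : ∀ k : E, ∫⁻ z in {z : E | 1 < ‖z‖}, ENNReal.ofReal (Real.exp ⟪k, z⟫) ∂m < ⊤)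
    (y₀ : E) :
    ContinuousAt (fun y => ∫ z, (Real.exp ⟪y, z⟫ - 1 - ⟪y, z⟫) ∂m) y₀ := by
  refine continuousAt_of_dominated ?_ ?_ ?_ ?_
    (bound := fun z => (∑ b : Fin q → Bool, Real.exp ⟪y₀ + sgn b, z⟫)
      + ∑ b : Fin q → Bool, Real.exp ⟪-y₀ + sgn b, z⟫)
  · exact Filter.Eventually.of_forall fun y => (cont_fy_right y).aestronglyMeasurable
  · have hball : Metric.ball y₀ 1 ∈ nhds y₀ := Metric.ball_mem_nhds _ one_pos
    refine Filter.eventually_iff_exists_mem.2 ⟨Metric.ball y₀ 1, hball, fun y hy => ?_⟩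
    refine Filter.Eventually.of_forall fun z => ?_
    rw [Real.norm_eq_abs, abs_of_nonneg (fy_nonneg _)]
    have hd : ‖y - y₀‖ ≤ 1 := (mem_ball_iff_norm.1 hy).le
    have hd2 : ‖(-y) - (-y₀)‖ ≤ 1 := by rwa [← neg_sub', norm_neg]
    have h1 := exp_le_bound y₀ y z hd
    have h2 := exp_le_bound (-y₀) (-y) z hd2
    rw [inner_neg_left] at h2
    have := fy_le ⟪y, z⟫
    linarith
  · refine Integrable.add ?_ ?_ <;>
      exact integrable_finset_sum _ fun b _ => integrable_exp m hEM _
  · exact Filter.Eventually.of_forall fun z => (cont_fy_left z).continuousAt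


lemma signedIntegral_zero (f : α → ℝ) : signedIntegral (0 : SignedMeasure α) f = 0 := by
  unfold _root_.signedIntegral
  rw [SignedMeasure.toJordanDecomposition_zero]
  simp

lemma integrable_tv_sum {ι : Type*} (s : Finset ι) (ν : ι → SignedMeasure α) {f : α → ℝ}
    (h : ∀ j ∈ s, Integrable f (ν j).totalVariation) :
    Integrable f (∑ j ∈ s, ν j).totalVariation := by
  classical
  induction s using Finset.cons_induction with
  | empty =>
      simp only [Finset.sum_empty]
      rw [SignedMeasure.totalVariation_zero]
      exact integrable_zero_measure
  | cons j s hj ih =>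
      rw [Finset.sum_cons]
      refine Integrable.mono_measure ?_ (totalVariation_add_le' _ _)
      exact ((h j (Finset.mem_cons_self j s)).add_measure
        (ih fun k hk => h k (Finset.mem_cons_of_mem hk)))

lemma signedIntegral_sum {ι : Type*} (s : Finset ι) (ν : ι → SignedMeasure α) {f : α → ℝ}
    (h : ∀ j ∈ s, Integrable f (ν j).totalVariation) :
    signedIntegral (∑ j ∈ s, ν j) f = ∑ j ∈ s, signedIntegral (ν j) f := by
  classical
  induction s using Finset.cons_induction with
  | empty => simp [signedIntegral_zero]
  | cons j s hj ih =>
      rw [Finset.sum_cons, Finset.sum_cons,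
        signedIntegral_add _ _ (h j (Finset.mem_cons_self j s))
          (integrable_tv_sum s ν fun k hk => h k (Finset.mem_cons_of_mem hk)),
        ih fun k hk => h k (Finset.mem_cons_of_mem hk)]

section Euclid

variable {p : ℕ}

lemma signedIntegral_kaff (K : Fin (p + 1) → SignedMeasure (EuclideanSpace ℝ (Fin p)))
    (x : EuclideanSpace ℝ (Fin p)) (f : EuclideanSpace ℝ (Fin p) → ℝ)
    (hint : ∀ i, Integrable f (K i).totalVariation) :
    signedIntegral (K 0 + ∑ i : Fin p, x i • K i.succ) f
      = signedIntegral (K 0) f + ∑ i : Fin p, x i * signedIntegral (K i.succ) f := by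
  have h1 : ∀ j ∈ Finset.univ, Integrable f ((x j • K j.succ).totalVariation) :=
    fun j _ => integrable_tv_smul _ (hint j.succ)
  rw [signedIntegral_add _ _ (hint 0) (integrable_tv_sum _ _ h1), signedIntegral_sum _ _ h1]
  congr 1
  exact Finset.sum_congr rfl fun j _ => signedIntegral_smul _ _ _

lemma lin_expand (a : Fin (p + 1) → EuclideanSpace ℝ (Fin p)) (w y : EuclideanSpace ℝ (Fin p)) :
    ∑ i : Fin p, y i * (a 0 i + ∑ j : Fin p, a j.succ i * w j)
      = (∑ k, y k * a 0 k) + ∑ j : Fin p, (∑ k, y k * a j.succ k) * w j := by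
  simp only [mul_add, Finset.sum_add_distrib, Finset.mul_sum, Finset.sum_mul]
  congr 1
  rw [Finset.sum_comm]
  exact Finset.sum_congr rfl fun j _ => Finset.sum_congr rfl fun i _ => by ring

lemma quad_expand (A : Fin (p + 1) → Matrix (Fin p) (Fin p) ℝ)
    (w y : EuclideanSpace ℝ (Fin p)) :
    ∑ k, ∑ l, y k * ((A 0 + ∑ i : Fin p, w i • A i.succ) k l) * y l
      = (∑ k, ∑ l, y k * A 0 k l * y l)
        + ∑ i : Fin p, w i * ∑ k, ∑ l, y k * A i.succ k l * y l := by
  have step : ∀ k l : Fin p, y k * ((A 0 + ∑ i : Fin p, w i • A i.succ) k l) * y l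
      = y k * A 0 k l * y l + ∑ i : Fin p, w i * (y k * A i.succ k l * y l) := by
    intro k l
    simp only [Matrix.add_apply, Matrix.sum_apply, Matrix.smul_apply, smul_eq_mul]
    rw [mul_add, add_mul, Finset.mul_sum, Finset.sum_mul]
    congr 1
    exact Finset.sum_congr rfl fun i _ => by ring
  simp only [step, Finset.sum_add_distrib]
  congr 1
  calc ∑ k : Fin p, ∑ l : Fin p, ∑ i : Fin p, w i * (y k * A i.succ k l * y l)
      = ∑ k : Fin p, ∑ i : Fin p, ∑ l : Fin p, w i * (y k * A i.succ k l * y l) :=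
        Finset.sum_congr rfl fun k _ => Finset.sum_comm
    _ = ∑ i : Fin p, ∑ k : Fin p, ∑ l : Fin p, w i * (y k * A i.succ k l * y l) :=
        Finset.sum_comm
    _ = ∑ i : Fin p, w i * ∑ k, ∑ l, y k * A i.succ k l * y l :=
        Finset.sum_congr rfl fun i _ => by simp [Finset.mul_sum]

end Euclid

end Stmt2

namespace Stmt2
open RealInnerProductSpace
variable {p : ℕ}

lemma ric_combine (a : Fin (p + 1) → EuclideanSpace ℝ (Fin p))
    (A : Fin (p + 1) → Matrix (Fin p) (Fin p) ℝ)
    (K : Fin (p + 1) → SignedMeasure (EuclideanSpace ℝ (Fin p)))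
    (w y : EuclideanSpace ℝ (Fin p))
    (hint : ∀ i, Integrable (fun z => Real.exp ⟪y, z⟫ - 1 - ⟪y, z⟫) (K i).totalVariation) :
    Ric a A K 0 y + ∑ i : Fin p, (Ric a A K i.succ y * w i
        + y i * (-(a 0 i + ∑ j : Fin p, a j.succ i * w j)))
      = kxy A K w y := by
  have hQ := lin_expand a w y
  unfold Ric kxy Kaff
  rw [signedIntegral_kaff K w _ hint, inner_apply' y (a 0), quad_expand A w y]
  have e2 : ∀ i : Fin p,
      (⟪y, a i.succ⟫ + 1 / 2 * (∑ k, ∑ l, y k * A i.succ k l * y l)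
          + signedIntegral (K i.succ) (fun z => Real.exp ⟪y, z⟫ - 1 - ⟪y, z⟫)) * w i
        + y i * (-(a 0 i + ∑ j : Fin p, a j.succ i * w j))
      = ((∑ k, y k * a i.succ k) * w i
          + w i * (1 / 2 * (∑ k, ∑ l, y k * A i.succ k l * y l))
          + w i * signedIntegral (K i.succ) (fun z => Real.exp ⟪y, z⟫ - 1 - ⟪y, z⟫))
        - y i * (a 0 i + ∑ j : Fin p, a j.succ i * w j) := by
    intro i; rw [inner_apply']; ring
  simp only [e2]
  rw [Finset.sum_sub_distrib, Finset.sum_add_distrib, Finset.sum_add_distrib, hQ]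
  have e3 : ∑ i : Fin p, w i * (1 / 2 * (∑ k, ∑ l, y k * A i.succ k l * y l))
      = 1 / 2 * ∑ i : Fin p, w i * ∑ k, ∑ l, y k * A i.succ k l * y l := by
    rw [Finset.mul_sum]; exact Finset.sum_congr rfl fun i _ => by ring
  rw [e3]; ring

lemma coord_cont (k : Fin p) : Continuous fun y : EuclideanSpace ℝ (Fin p) => y k :=
  (continuous_apply k).comp (EuclideanSpace.equiv (Fin p) ℝ).continuous

lemma cont_signedIntegral (μ : SignedMeasure (EuclideanSpace ℝ (Fin p)))
    (hEM : ∀ k : EuclideanSpace ℝ (Fin p),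
      ∫⁻ z in {z : EuclideanSpace ℝ (Fin p) | 1 < ‖z‖},
        ENNReal.ofReal (Real.exp ⟪k, z⟫) ∂μ.totalVariation < ⊤) :
    Continuous fun y => signedIntegral μ (fun z => Real.exp ⟪y, z⟫ - 1 - ⟪y, z⟫) := by
  have hp : ∀ k : EuclideanSpace ℝ (Fin p),
      ∫⁻ z in {z : EuclideanSpace ℝ (Fin p) | 1 < ‖z‖},
        ENNReal.ofReal (Real.exp ⟪k, z⟫) ∂μ.toJordanDecomposition.posPart < ⊤ := fun k =>
    lt_of_le_of_lt (lintegral_mono' (Measure.restrict_mono (le_refl _) (posPart_le_tv μ))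
      (le_refl _)) (hEM k)
  have hn : ∀ k : EuclideanSpace ℝ (Fin p),
      ∫⁻ z in {z : EuclideanSpace ℝ (Fin p) | 1 < ‖z‖},
        ENNReal.ofReal (Real.exp ⟪k, z⟫) ∂μ.toJordanDecomposition.negPart < ⊤ := fun k =>
    lt_of_le_of_lt (lintegral_mono' (Measure.restrict_mono (le_refl _) (negPart_le_tv μ))
      (le_refl _)) (hEM k)
  unfold _root_.signedIntegral
  exact continuous_iff_continuousAt.2 fun y₀ =>
    (continuousAt_int_fy _ hp y₀).sub (continuousAt_int_fy _ hn y₀)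

lemma integrable_fy_tv (μ : SignedMeasure (EuclideanSpace ℝ (Fin p)))
    (hEM : ∀ k : EuclideanSpace ℝ (Fin p),
      ∫⁻ z in {z : EuclideanSpace ℝ (Fin p) | 1 < ‖z‖},
        ENNReal.ofReal (Real.exp ⟪k, z⟫) ∂μ.totalVariation < ⊤)
    (y : EuclideanSpace ℝ (Fin p)) :
    Integrable (fun z => Real.exp ⟪y, z⟫ - 1 - ⟪y, z⟫) μ.totalVariation :=
  integrable_fy _ hEM y

lemma cont_Ric (a : Fin (p + 1) → EuclideanSpace ℝ (Fin p))
    (A : Fin (p + 1) → Matrix (Fin p) (Fin p) ℝ)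
    (K : Fin (p + 1) → SignedMeasure (EuclideanSpace ℝ (Fin p)))
    (hEM : ∀ (k : EuclideanSpace ℝ (Fin p)) (i : Fin (p + 1)),
      ∫⁻ z in {z : EuclideanSpace ℝ (Fin p) | 1 < ‖z‖},
        ENNReal.ofReal (Real.exp ⟪k, z⟫) ∂(K i).totalVariation < ⊤)
    (i : Fin (p + 1)) : Continuous (Ric a A K i) := by
  unfold Ric
  refine Continuous.add (Continuous.add ?_ ?_) (cont_signedIntegral _ (fun k => hEM k i))
  · exact Continuous.inner continuous_id continuous_const
  · exact continuous_const.mul (continuous_finset_sum _ fun k _ =>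
      continuous_finset_sum _ fun l _ => ((coord_cont k).mul continuous_const).mul (coord_cont l))

end Stmt2

/-- Under the exponential moment condition, any solution `(ψ₀, ψ)` of the
generalized Riccati system on `[0,T)` satisfies, for every `x ∈ ℝ^p` and `t ∈ [0,T)`,
`ψ₀(t) + ψ(t)·x = u·f(t,x) + ∫₀ᵗ k(f(t−s,x), ψ(s)) ds`, where `f(·,x)` is the flow of the
linear ODE `x' = a⁰ + a x` (here `g`), `a` being the matrix with columns `a¹,…,a^p`. -/
theorem statement2 {p : ℕ} (a : Fin (p + 1) → EuclideanSpace ℝ (Fin p))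
    (A : Fin (p + 1) → Matrix (Fin p) (Fin p) ℝ) (hA : ∀ i, (A i).IsSymm)
    (K : Fin (p + 1) → SignedMeasure (EuclideanSpace ℝ (Fin p)))
    (hK0 : ∀ i, (K i).totalVariation {0} = 0)
    (hmom : ∀ i, ∫⁻ z, ENNReal.ofReal (min (‖z‖ ^ 2) ‖z‖) ∂(K i).totalVariation < ⊤)
    (hEM : ∀ (k : EuclideanSpace ℝ (Fin p)) (i : Fin (p + 1)),
      ∫⁻ z in {z : EuclideanSpace ℝ (Fin p) | 1 < ‖z‖},
        ENNReal.ofReal (Real.exp ⟪k, z⟫) ∂(K i).totalVariation < ⊤)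
    (u : EuclideanSpace ℝ (Fin p)) (T : ℝ≥0∞) (hT : 0 < T)
    (ψ₀ : ℝ → ℝ) (ψ : ℝ → EuclideanSpace ℝ (Fin p))
    (hψ₀0 : ψ₀ 0 = 0) (hψ0 : ψ 0 = u)
    (hode : ∀ t, 0 ≤ t → ENNReal.ofReal t < T →
      HasDerivWithinAt ψ₀ (Ric a A K 0 (ψ t))
          {s : ℝ | 0 ≤ s ∧ ENNReal.ofReal s < T} t ∧
      ∀ i : Fin p, HasDerivWithinAt (fun s => ψ s i) (Ric a A K i.succ (ψ t))
          {s : ℝ | 0 ≤ s ∧ ENNReal.ofReal s < T} t)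
    (g : ℝ → EuclideanSpace ℝ (Fin p) → EuclideanSpace ℝ (Fin p))
    (hg0 : ∀ x, g 0 x = x)
    (hg : ∀ (t : ℝ) (x : EuclideanSpace ℝ (Fin p)) (i : Fin p),
      HasDerivAt (fun s => g s x i) (a 0 i + ∑ j, a j.succ i * g t x j) t) :
    ∀ (x : EuclideanSpace ℝ (Fin p)) (t : ℝ), 0 ≤ t → ENNReal.ofReal t < T →
      ψ₀ t + ⟪ψ t, x⟫ = ⟪u, g t x⟫ + ∫ s in (0:ℝ)..t, kxy A K (g (t - s) x) (ψ s) := by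
  intro x t ht htT
  classical
  set D := {s : ℝ | 0 ≤ s ∧ ENNReal.ofReal s < T} with hD
  have hsubD : Set.Icc 0 t ⊆ D := fun s hs =>
    ⟨hs.1, lt_of_le_of_lt (ENNReal.ofReal_le_ofReal hs.2) htT⟩
  have hDnhds : ∀ s : ℝ, 0 < s → ENNReal.ofReal s < T → D ∈ nhds s := by
    intro s hs0 hsT
    by_cases hTtop : T = ⊤
    · refine Filter.mem_of_superset (Ioi_mem_nhds hs0) fun r hr => ?_
      exact ⟨(Set.mem_Ioi.1 hr).le, hTtop ▸ ENNReal.ofReal_lt_top⟩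
    · have hs' : s < T.toReal := (ENNReal.ofReal_lt_iff_lt_toReal hs0.le hTtop).1 hsT
      refine Filter.mem_of_superset (Ioo_mem_nhds hs0 hs') fun r hr => ?_
      exact ⟨hr.1.le, (ENNReal.ofReal_lt_iff_lt_toReal hr.1.le hTtop).2 hr.2⟩
  have hint : ∀ (y : EuclideanSpace ℝ (Fin p)) (i : Fin (p + 1)),
      Integrable (fun z => Real.exp ⟪y, z⟫ - 1 - ⟪y, z⟫) (K i).totalVariation :=
    fun y i => Stmt2.integrable_fy_tv (K i) (fun k => hEM k i) y
  -- continuity of g coordinates (in the time variable, composed with t - ·)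
  have hgc : ∀ i : Fin p, Continuous fun s => g (t - s) x i := by
    intro i
    have h1 : Continuous fun s => g s x i :=
      continuous_iff_continuousAt.2 fun s => (hg s x i).continuousAt
    exact h1.comp (continuous_const.sub continuous_id)
  -- continuity of ψ coordinates on Icc 0 t
  have hψc : ∀ i : Fin p, ContinuousOn (fun s => ψ s i) (Set.Icc 0 t) := by
    intro i s hs
    have hsD := hsubD hs
    exact (((hode s hsD.1 hsD.2).2 i).continuousWithinAt).mono hsubD
  have hψ₀c : ContinuousOn ψ₀ (Set.Icc 0 t) := by
    intro s hs
    have hsD := hsubD hs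
    exact ((hode s hsD.1 hsD.2).1.continuousWithinAt).mono hsubD
  have hψcE : ContinuousOn ψ (Set.Icc 0 t) := by
    have h1 : ContinuousOn (fun s => (fun i => ψ s i : Fin p → ℝ)) (Set.Icc 0 t) :=
      continuousOn_pi.2 hψc
    exact ((EuclideanSpace.equiv (Fin p) ℝ).symm.continuous.comp_continuousOn h1 :)
  -- derivative of the g part
  have hgd : ∀ (s : ℝ) (i : Fin p), HasDerivAt (fun r => g (t - r) x i)
      (-(a 0 i + ∑ j, a j.succ i * g (t - s) x j)) s := by
    intro s i
    have h1 := hg (t - s) x i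
    have h2 : HasDerivAt (fun r : ℝ => t - r) (-1) s := (hasDerivAt_id s).const_sub t
    have h3 := HasDerivAt.comp s h1 h2
    simpa [Function.comp_def] using h3
  -- F and its derivative
  set F : ℝ → ℝ := fun s => ψ₀ s + ∑ i, ψ s i * g (t - s) x i with hFdef
  have hFd : ∀ s ∈ Set.Ioo 0 t, HasDerivAt F (kxy A K (g (t - s) x) (ψ s)) s := by
    intro s hs
    have hsT' : ENNReal.ofReal s < T :=
      lt_of_le_of_lt (ENNReal.ofReal_le_ofReal hs.2.le) htT
    have hsD : D ∈ nhds s := hDnhds s hs.1 hsT'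
    obtain ⟨h0, hi⟩ := hode s hs.1.le hsT'
    have hψ₀d : HasDerivAt ψ₀ (Ric a A K 0 (ψ s)) s := h0.hasDerivAt hsD
    have hψid : ∀ i : Fin p, HasDerivAt (fun r => ψ r i) (Ric a A K i.succ (ψ s)) s :=
      fun i => (hi i).hasDerivAt hsD
    have hsum : HasDerivAt (fun r => ∑ i, ψ r i * g (t - r) x i)
        (∑ i : Fin p, (Ric a A K i.succ (ψ s) * g (t - s) x i
          + ψ s i * (-(a 0 i + ∑ j, a j.succ i * g (t - s) x j)))) s :=
      HasDerivAt.fun_sum fun i _ => (hψid i).mul (hgd s i)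
    have h4 := hψ₀d.add hsum
    rwa [Stmt2.ric_combine a A K (g (t - s) x) (ψ s) (fun i => hint _ i)] at h4
  -- continuity of the integrand on Icc 0 t
  have hkc : ContinuousOn (fun s => kxy A K (g (t - s) x) (ψ s)) (Set.Icc 0 t) := by
    have heq : ∀ s : ℝ, kxy A K (g (t - s) x) (ψ s)
        = Ric a A K 0 (ψ s) + ∑ i : Fin p, (Ric a A K i.succ (ψ s) * g (t - s) x i
          + ψ s i * (-(a 0 i + ∑ j, a j.succ i * g (t - s) x j))) :=
      fun s => (Stmt2.ric_combine a A K (g (t - s) x) (ψ s) (fun i => hint _ i)).symm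
    refine ContinuousOn.congr ?_ (fun s _ => heq s)
    refine ContinuousOn.add ?_ ?_
    · exact (Stmt2.cont_Ric a A K hEM 0).comp_continuousOn hψcE
    · refine continuousOn_finset_sum _ fun i _ => ContinuousOn.add ?_ ?_
      · exact ((Stmt2.cont_Ric a A K hEM i.succ).comp_continuousOn hψcE).mul
          (hgc i).continuousOn
      · refine (hψc i).mul (ContinuousOn.neg ?_)
        exact continuousOn_const.add (continuousOn_finset_sum _ fun j _ =>
          continuousOn_const.mul (hgc j).continuousOn)
  have hFc : ContinuousOn F (Set.Icc 0 t) := by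
    refine hψ₀c.add (continuousOn_finset_sum _ fun i _ => (hψc i).mul (hgc i).continuousOn)
  have hki : IntervalIntegrable (fun s => kxy A K (g (t - s) x) (ψ s)) MeasureTheory.volume 0 t :=
    hkc.intervalIntegrable_of_Icc ht
  have hFTC := intervalIntegral.integral_eq_sub_of_hasDeriv_right_of_le ht hFc
    (fun s hs => (hFd s hs).hasDerivWithinAt) hki
  have hFt : F t = ψ₀ t + ∑ i, ψ t i * x i := by
    simp [hFdef, hg0 x]
  have hF0 : F 0 = ∑ i, u i * g t x i := by
    simp [hFdef, hψ₀0, hψ0]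
  have hip1 : ⟪ψ t, x⟫ = ∑ i, ψ t i * x i := Stmt2.inner_apply' _ _
  have hip2 : ⟪u, g t x⟫ = ∑ i, u i * g t x i := Stmt2.inner_apply' _ _
  rw [hip1, hip2]
  rw [hFTC, hFt, hF0]
  ring


end
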